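/- Let α : I → ℝ³ be a unit-speed curve with positive curvature. Then α × α' has constant nonzero magnitude if and only if α is a rectifying curve or the image of α is contained in a sphere centered at the origin. -/

import Mathlib

open Real Set
open scoped RealInnerProductSpace

noncomputable section

/-- Euclidean 3-space. -/
abbrev E3 := EuclideanSpace ℝ (Fin 3)

/-- Constructor for points of `E3`. -/
def e3 (x y z : ℝ) : E3 := (WithLp.equiv 2 (Fin 3 → ℝ)).symm ![x, y, z]

/-- The cross product on `E3`. -/
def cross3 (a b : E3) : E3 :=
  e3 (a 1 * b 2 - a 2 * b 1) (a 2 * b 0 - a 0 * b 2) (a 0 * b 1 - a 1 * b 0)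

/-- Lagrange's identity in dimension 3. -/
lemma lagrange3 (u v : E3) :
    ⟪cross3 u v, cross3 u v⟫ = ⟪u,u⟫ * ⟪v,v⟫ - ⟪u,v⟫^2 := by
  simp only [cross3, e3, PiLp.inner_apply, RCLike.inner_apply, Fin.sum_univ_three,
    WithLp.equiv_symm_apply]
  simp
  ring

/-- A function with vanishing derivative on an open convex set is constant there. -/
lemma const_of_deriv_zero {I : Set ℝ} (hIo : IsOpen I) (hIc : Convex ℝ I)
    {h : ℝ → ℝ} (hd : ∀ s ∈ I, HasDerivAt h 0 s) {x y : ℝ} (hx : x ∈ I) (hy : y ∈ I) :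
    h x = h y := by
  refine hIc.is_const_of_fderivWithin_eq_zero (𝕜 := ℝ)
    (fun s hs => ((hd s hs).differentiableAt).differentiableWithinAt) (fun s hs => ?_) hx hy
  rw [fderivWithin_of_isOpen hIo hs, (hd s hs).hasFDerivAt.fderiv]
  ext t
  simp

/-- A unit-speed curve with positive curvature has `α × α'` of constant nonzero
magnitude iff it is rectifying or spherical about the origin. -/
theorem cross_const_iff_rectifying_or_spherical (I : Set ℝ) (hIo : IsOpen I) (hIc : Convex ℝ I)
    (α T N B : ℝ → E3) (κ τ : ℝ → ℝ)
    (hα : ∀ s ∈ I, HasDerivAt α (T s) s)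
    (hT : ∀ s ∈ I, HasDerivAt T (κ s • N s) s)
    (hN : ∀ s ∈ I, HasDerivAt N ((-κ s) • T s + τ s • B s) s)
    (hB : ∀ s ∈ I, HasDerivAt B ((-τ s) • N s) s)
    (hTu : ∀ s ∈ I, ‖T s‖ = 1)
    (hNu : ∀ s ∈ I, ‖N s‖ = 1)
    (hBdef : ∀ s ∈ I, B s = cross3 (T s) (N s))
    (hκ : ∀ s ∈ I, 0 < κ s) :
    (∃ δ : ℝ, δ ≠ 0 ∧ ∀ s ∈ I, ‖cross3 (α s) (T s)‖ = δ) ↔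
      ((∀ s ∈ I, ⟪α s, N s⟫ = 0) ∨ ∃ r : ℝ, ∀ s ∈ I, ‖α s‖ = r) := by
  -- abbreviations
  set a : ℝ → ℝ := fun u => ⟪α u, T u⟫ with ha_def
  set n : ℝ → ℝ := fun u => ⟪α u, N u⟫ with hn_def
  set g : ℝ → ℝ := fun u => ⟪α u, α u⟫ with hg_def
  set h : ℝ → ℝ := fun u => g u - (a u)^2 with hh_def
  -- basic derivative computations
  have ha' : ∀ s ∈ I, HasDerivAt a (1 + κ s * n s) s := by
    intro s hs
    have H : HasDerivAt (fun t => ⟪α t, T t⟫) (⟪α s, κ s • N s⟫ + ⟪T s, T s⟫) s :=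
      HasDerivAt.inner ℝ (hα s hs) (hT s hs)
    convert H using 1
    rw [real_inner_smul_right, real_inner_self_eq_norm_sq, hTu s hs]
    simp [hn_def]
    ring
  have hg' : ∀ s ∈ I, HasDerivAt g (2 * a s) s := by
    intro s hs
    have H : HasDerivAt (fun t => ⟪α t, α t⟫) (⟪α s, T s⟫ + ⟪T s, α s⟫) s :=
      HasDerivAt.inner ℝ (hα s hs) (hα s hs)
    convert H using 1
    simp only [ha_def]
    rw [real_inner_comm (T s) (α s)]
    ring
  have hh' : ∀ s ∈ I, HasDerivAt h (-(2 * κ s * (a s * n s))) s := by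
    intro s hs
    have H : HasDerivAt h (2 * a s - ↑2 * a s ^ (2 - 1) * (1 + κ s * n s)) s :=
      (hg' s hs).sub ((ha' s hs).pow 2)
    convert H using 1
    push_cast
    ring
  -- ‖α × T‖² = h on I
  have hhc : ∀ s ∈ I, h s = ‖cross3 (α s) (T s)‖^2 := by
    intro s hs
    rw [← real_inner_self_eq_norm_sq, lagrange3]
    have : ⟪T s, T s⟫ = 1 := by rw [real_inner_self_eq_norm_sq, hTu s hs]; norm_num
    rw [this]
    simp [hh_def, hg_def, ha_def]
  -- continuity
  have hconta : ∀ s ∈ I, ContinuousAt a s := fun s hs => (ha' s hs).continuousAt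
  have hcontn : ∀ s ∈ I, ContinuousAt n s :=
    fun s hs => (HasDerivAt.inner ℝ (hα s hs) (hN s hs)).continuousAt
  constructor
  · -- forward direction
    rintro ⟨δ, hδ0, hδ⟩
    -- h is constant δ² on I, so its derivative vanishes
    have han : ∀ s ∈ I, a s * n s = 0 := by
      intro s hs
      have hev : h =ᶠ[nhds s] (fun _ => δ^2) := by
        filter_upwards [hIo.mem_nhds hs] with u hu
        rw [hhc u hu, hδ u hu]
      have hconst : HasDerivAt h 0 s :=
        (hasDerivAt_const s (δ^2)).congr_of_eventuallyEq hev
      have h2 : (2 : ℝ) * κ s * (a s * n s) = 0 := by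
        have := (hh' s hs).unique hconst
        linarith
      rcases mul_eq_zero.1 h2 with h3 | h3
      · rcases mul_eq_zero.1 h3 with h4 | h4
        · norm_num at h4
        · exact absurd h4 (hκ s hs).ne'
      · exact h3
    by_cases h1 : ∀ s ∈ I, ⟪α s, N s⟫ = 0
    · exact Or.inl h1
    · push_neg at h1
      obtain ⟨s0, hs0, hn0⟩ := h1
      -- the set where n vanishes is clopen in I; since n s0 ≠ 0, n never vanishes on I
      have hnever : ∀ s ∈ I, n s ≠ 0 := by
        intro s1 hs1 hn1
        -- O1 : points of I where n = 0 ; O2 : points of I where n ≠ 0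
        set O1 : Set ℝ := {s | s ∈ I ∧ n s = 0} with hO1
        set O2 : Set ℝ := {s | s ∈ I ∧ n s ≠ 0} with hO2
        have hO1open : IsOpen O1 := by
          rw [isOpen_iff_mem_nhds]
          rintro s ⟨hs, hns⟩
          by_cases hA : a s = 0
          · -- a s = 0 and n s = 0 : a' s = 1 ≠ 0, so a ≠ 0 on a punctured nbhd
            have hder : HasDerivAt a 1 s := by
              have := ha' s hs; rwa [hns, mul_zero, add_zero] at this
            have hev := hder.eventually_ne (c := a s) one_ne_zero
            have hI' : ∀ᶠ u in nhdsWithin s {s}ᶜ, u ∈ I :=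
              eventually_nhdsWithin_of_eventually_nhds (hIo.mem_nhds hs)
            have hev2 : ∀ᶠ u in nhdsWithin s {s}ᶜ, u ∈ I ∧ n u = 0 := by
              filter_upwards [hev, hI'] with u hu huI
              rw [hA] at hu
              exact ⟨huI, by have := han u huI; rcases mul_eq_zero.1 this with h | h
                             · exact absurd h hu
                             · exact h⟩
            rw [eventually_nhdsWithin_iff] at hev2
            filter_upwards [hev2, hIo.mem_nhds hs] with u hu huI
            by_cases hus : u = s
            · exact hus ▸ ⟨hs, hns⟩
            · exact hu hus
          · -- a s ≠ 0 : a ≠ 0 near s, so n = 0 near s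
            filter_upwards [(hconta s hs).eventually_ne hA, hIo.mem_nhds hs] with u hu huI
            refine ⟨huI, ?_⟩
            rcases mul_eq_zero.1 (han u huI) with h | h
            · exact absurd h hu
            · exact h
        have hO2open : IsOpen O2 := by
          rw [isOpen_iff_mem_nhds]
          rintro s ⟨hs, hns⟩
          filter_upwards [(hcontn s hs).eventually_ne hns, hIo.mem_nhds hs] with u hu huI
          exact ⟨huI, hu⟩
        have hsub : I ⊆ O1 ∪ O2 := by
          intro s hs
          by_cases hns : n s = 0
          · exact Or.inl ⟨hs, hns⟩
          · exact Or.inr ⟨hs, hns⟩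
        have := hIc.isPreconnected O1 O2 hO1open hO2open hsub
          ⟨s1, hs1, hs1, hn1⟩ ⟨s0, hs0, hs0, hn0⟩
        obtain ⟨x, _, ⟨_, hx1⟩, ⟨_, hx2⟩⟩ := this
        exact hx2 hx1
      -- n never 0 on I, and a·n = 0, so a ≡ 0 on I, hence ‖α‖ constant
      have haz : ∀ s ∈ I, a s = 0 := by
        intro s hs
        rcases mul_eq_zero.1 (han s hs) with h | h
        · exact h
        · exact absurd h (hnever s hs)
      have hgz : ∀ s ∈ I, HasDerivAt g 0 s := by
        intro s hs
        have := hg' s hs; rwa [haz s hs, mul_zero] at this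
      refine Or.inr ⟨‖α s0‖, fun s hs => ?_⟩
      have : g s = g s0 := const_of_deriv_zero hIo hIc hgz hs hs0
      have h2 : ‖α s‖^2 = ‖α s0‖^2 := by
        rw [← real_inner_self_eq_norm_sq, ← real_inner_self_eq_norm_sq]
        exact this
      calc ‖α s‖ = √(‖α s‖^2) := (Real.sqrt_sq (norm_nonneg _)).symm
        _ = √(‖α s0‖^2) := by rw [h2]
        _ = ‖α s0‖ := Real.sqrt_sq (norm_nonneg _)
  · -- reverse direction
    rintro hcase
    by_cases hne : I.Nonempty
    · obtain ⟨s0, hs0⟩ := hne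
      -- helper : α cannot vanish identically on I
      have hα0 : ¬ (∀ s ∈ I, α s = 0) := by
        intro hz
        have hev : α =ᶠ[nhds s0] (fun _ => (0 : E3)) := by
          filter_upwards [hIo.mem_nhds hs0] with u hu
          exact hz u hu
        have : HasDerivAt α 0 s0 :=
          (hasDerivAt_const s0 (0 : E3)).congr_of_eventuallyEq hev
        have hT0 := (hα s0 hs0).unique this
        have := hTu s0 hs0
        rw [hT0] at this
        simp at this
      -- helper : recover the norm from its square
      have hsq : ∀ (x : E3) (d : ℝ), 0 ≤ d → ‖x‖^2 = d^2 → ‖x‖ = d := by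
        intro x d hd hx
        calc ‖x‖ = √(‖x‖^2) := (Real.sqrt_sq (norm_nonneg _)).symm
          _ = √(d^2) := by rw [hx]
          _ = d := Real.sqrt_sq hd
      rcases hcase with hrect | ⟨r, hr⟩
      · -- rectifying case : n ≡ 0 on I, so h is constant on I
        have hzero : ∀ s ∈ I, HasDerivAt h 0 s := by
          intro s hs
          have hns : n s = 0 := hrect s hs
          have := hh' s hs
          rwa [hns, mul_zero, mul_zero, neg_zero] at this
        have hconst : ∀ s ∈ I, h s = h s0 := fun s hs =>
          const_of_deriv_zero hIo hIc hzero hs hs0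
        have hc0 : 0 ≤ h s0 := by rw [hhc s0 hs0]; positivity
        have hcne : h s0 ≠ 0 := by
          intro hc
          -- then α = a • T on I
          have hαT : ∀ s ∈ I, α s = a s • T s := by
            intro s hs
            have hT1 : ⟪T s, T s⟫ = 1 := by
              rw [real_inner_self_eq_norm_sq, hTu s hs]; norm_num
            have hz : ‖α s - a s • T s‖^2 = 0 := by
              rw [← real_inner_self_eq_norm_sq, inner_sub_sub_self,
                real_inner_smul_right, real_inner_smul_left, real_inner_smul_left,
                real_inner_smul_right, hT1]
              have hhs : h s = 0 := by rw [hconst s hs, hc]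
              simp only [hh_def, hg_def, ha_def] at hhs ⊢
              have hcomm : (⟪T s, α s⟫ : ℝ) = ⟪α s, T s⟫ := real_inner_comm _ _
              rw [hcomm]
              nlinarith [hhs]
            have h4 := norm_eq_zero.1 (pow_eq_zero_iff (n := 2) (by norm_num) |>.1 hz)
            exact sub_eq_zero.1 h4
          -- then a ≡ 0 on I, so α ≡ 0 on I : contradiction
          have haz : ∀ s ∈ I, a s = 0 := by
            intro s hs
            have hF : HasDerivAt (fun u => a u • T u)
                (a s • (κ s • N s) + (1 + κ s * n s) • T s) s :=
              (ha' s hs).smul (hT s hs)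
            have hev : α =ᶠ[nhds s] (fun u => a u • T u) := by
              filter_upwards [hIo.mem_nhds hs] with u hu
              exact hαT u hu
            have hF2 : HasDerivAt α (a s • (κ s • N s) + (1 + κ s * n s) • T s) s :=
              hF.congr_of_eventuallyEq hev
            have huniq := (hα s hs).unique hF2
            have hns : n s = 0 := hrect s hs
            rw [hns, mul_zero, add_zero, one_smul, smul_smul] at huniq
            have : (a s * κ s) • N s = 0 := by
              have := huniq
              rw [add_comm] at this
              exact (left_eq_add.1 this)
            rcases smul_eq_zero.1 this with h5 | h5
            · rcases mul_eq_zero.1 h5 with h6 | h6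
              · exact h6
              · exact absurd h6 (hκ s hs).ne'
            · have := hNu s hs
              rw [h5] at this
              simp at this
          exact hα0 (fun s hs => by rw [hαT s hs, haz s hs, zero_smul])
        refine ⟨√(h s0), ?_, fun s hs => ?_⟩
        · exact (Real.sqrt_pos.2 (lt_of_le_of_ne hc0 (Ne.symm hcne))).ne'
        · rw [← hconst s hs, hhc s hs]
          exact (Real.sqrt_sq (norm_nonneg _)).symm
      · -- spherical case : ‖α‖ ≡ r on I, so a ≡ 0 and h ≡ r²
        have haz : ∀ s ∈ I, a s = 0 := by
          intro s hs
          have hev : g =ᶠ[nhds s] (fun _ => r^2) := by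
            filter_upwards [hIo.mem_nhds hs] with u hu
            simp only [hg_def]
            rw [real_inner_self_eq_norm_sq, hr u hu]
          have hconst : HasDerivAt g 0 s :=
            (hasDerivAt_const s (r^2)).congr_of_eventuallyEq hev
          have := (hg' s hs).unique hconst
          linarith
        have hr0 : 0 ≤ r := (hr s0 hs0) ▸ norm_nonneg _
        have hrne : r ≠ 0 := by
          intro hrz
          exact hα0 (fun s hs => norm_eq_zero.1 (by rw [hr s hs, hrz]))
        refine ⟨r, hrne, fun s hs => ?_⟩
        apply hsq _ _ hr0
        rw [← hhc s hs]
        simp only [hh_def, hg_def, ha_def]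
        have h1 : (⟪α s, α s⟫ : ℝ) = r^2 := by
          rw [real_inner_self_eq_norm_sq, hr s hs]
        have h2 := haz s hs
        simp only [ha_def] at h2
        rw [h1, h2]
        ring
    · rw [Set.not_nonempty_iff_eq_empty] at hne
      exact ⟨1, one_ne_zero, fun s hs => by rw [hne] at hs; exact absurd hs (Set.notMem_empty s)⟩
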